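/- Let A and B be alphabets, let S be a finite semigroup, and let φ : A⁺ → S and ψ : B⁺ → S be surjective semigroup homomorphisms. Then the fiber product Π(φ,ψ) = {(u,v) ∈ A⁺ × B⁺ : φ(u) = ψ(v)} is not finitely generated as a semigroup. -/
import Mathlib


/-- The fiber product of two semigroup homomorphisms with common codomain,
as a subsemigroup of the direct product. -/
def fiberSubsemigroup {S T F : Type*} [Semigroup S] [Semigroup T] [Semigroup F]
    (φ : S →ₙ* F) (ψ : T →ₙ* F) : Subsemigroup (S × T) where
  carrier := {p | φ p.1 = ψ p.2}
  mul_mem' := by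
    intro a b ha hb
    simp only [Set.mem_setOf_eq, Prod.fst_mul, Prod.snd_mul, map_mul] at *
    rw [ha, hb]

/-- A subsemigroup is finitely generated if it is the closure of a finite subset. -/
def SubsemigroupFG {M : Type*} [Mul M] (P : Subsemigroup M) : Prop :=
  ∃ X : Set M, X.Finite ∧ Subsemigroup.closure X = P

private lemma one_le_len {α : Type} (x : FreeSemigroup α) : 1 ≤ x.length :=
  Nat.le_add_left 1 x.tail.length

/-- the fiber product of two free semigroups over a finite
semigroup is never finitely generated. -/
theorem stmt0 {A B S : Type} [Semigroup S] [Finite S] [Nonempty S]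
    (φ : FreeSemigroup A →ₙ* S) (ψ : FreeSemigroup B →ₙ* S)
    (hφ : Function.Surjective φ) (hψ : Function.Surjective ψ) :
    ¬ SubsemigroupFG (fiberSubsemigroup φ ψ) := by
  rintro ⟨X, hXfin, hXcl⟩
  -- bound M on second lengths of generators
  obtain ⟨M, hM⟩ : ∃ M, ∀ p ∈ X, (p.2 : FreeSemigroup B).length ≤ M := by
    obtain ⟨M, hM⟩ := (hXfin.image (fun p => p.2.length)).bddAbove
    exact ⟨M, fun p hp => hM ⟨p, hp, rfl⟩⟩
  -- key bound on all elements of the fiber subsemigroup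
  have key : ∀ p ∈ fiberSubsemigroup φ ψ,
      (p.2 : FreeSemigroup B).length ≤ M * p.1.length := by
    intro p hp
    rw [← hXcl] at hp
    induction hp using Subsemigroup.closure_induction with
    | mem p hp =>
        calc p.2.length ≤ M := hM p hp
        _ ≤ M * p.1.length := Nat.le_mul_of_pos_right M (one_le_len _)
    | mul p q _ _ hp hq =>
        simp only [Prod.snd_mul, Prod.fst_mul, FreeSemigroup.length_mul, Nat.mul_add]
        exact Nat.add_le_add hp hq
  -- get a word w in B⁺
  obtain ⟨w, -⟩ := hψ (Classical.arbitrary S)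
  -- f k = w^(k+1)
  let f : ℕ → FreeSemigroup B := fun k => Nat.rec w (fun _ v => v * w) k
  have flen : ∀ k, k + 1 ≤ (f k).length := by
    intro k
    induction k with
    | zero => exact one_le_len w
    | succ k ih =>
        show k + 1 + 1 ≤ (f k * w).length
        rw [FreeSemigroup.length_mul]
        exact Nat.add_le_add ih (one_le_len w)
  have fadd : ∀ a b, f (a + b + 1) = f a * f b := by
    intro a b
    induction b with
    | zero => rfl
    | succ b ih =>
        show f (a + b + 1) * w = f a * (f b * w)
        rw [ih, mul_assoc]
  -- pigeonhole: ψ (f ·) not injective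
  obtain ⟨i, j, hij, hne⟩ := Finite.exists_ne_map_eq_of_infinite (fun k => ψ (f k))
  wlog hlt : i < j generalizing i j
  · exact this j i hij.symm hne.symm (by omega)
  set d := j - i - 1 with hd
  have hj : j = i + d + 1 := by omega
  have step : ∀ m, ψ (f (i + m * (d + 1))) = ψ (f i) := by
    intro m
    induction m with
    | zero => norm_num
    | succ m ih =>
        have h3 : i + (m + 1) * (d + 1) = (i + m * (d + 1)) + d + 1 := by ring
        rw [h3, fadd, map_mul, ih, ← map_mul, ← fadd, ← hj]
        exact hne.symm
  -- find u with φ u = ψ (f i)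
  obtain ⟨u, hu⟩ := hφ (ψ (f i))
  set m := M * u.length + 1 with hm
  have hmem : (u, f (i + m * (d + 1))) ∈ fiberSubsemigroup φ ψ := by
    show φ u = ψ _
    rw [hu, step]
  have := key _ hmem
  have h2 := flen (i + m * (d + 1))
  simp only at this
  have : i + m * (d + 1) + 1 ≤ M * u.length := le_trans h2 this
  nlinarith [hm, Nat.zero_le i, Nat.zero_le d]
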